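/- Let S = {s₁,…,sₙ} be a finite set of states, C a set of consequences with addition, and A the set of functions P : S → C with pointwise addition. Suppose the preference order ≻ on A is represented by an additive real value function V (i.e., V(P₁+P₂) = V(P₁)+V(P₂) and V(P₁) > V(P₂) iff P₁ ≻ P₂), and Dominance holds: if V(P(sᵢ)) ≥ V(P'(sᵢ)) for all i then V(P) ≥ V(P'). Then there exist nonnegative reals p₁,…,pₙ with Σᵢ pᵢ = 1 such that for every act P, V(P) = Σᵢ pᵢ·V(P(sᵢ)). -/
import Mathlib


lemma aux_real (c q t f : ℝ) (hc : 0 < c) (hq : 0 ≤ q)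
    (H : ∀ k : ℤ, ∀ m : ℕ, 0 < m →
      (((k:ℝ) * c ≤ m * t → (k:ℝ) * q ≤ m * f) ∧ ((m:ℝ) * t ≤ k * c → (m:ℝ) * f ≤ k * q))) :
    c * f = t * q := by
  by_contra h
  rcases Ne.lt_or_gt h with h | h
  · rcases eq_or_lt_of_le hq with hq0 | hq0
    · -- q = 0, c*f < 0 so f < 0, but k*c ≤ t for k = ⌊t/c⌋ gives 0 ≤ f
      rw [← hq0] at h
      have hf : f < 0 := by nlinarith
      have ht : t / c * c = t := div_mul_cancel₀ t hc.ne'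
      have hk : (⌊t / c⌋ : ℝ) * c ≤ (1:ℕ) * t := by
        have h2 := Int.floor_le (t / c)
        push_cast
        nlinarith [mul_le_mul_of_nonneg_right h2 hc.le]
      have := (H ⌊t / c⌋ 1 one_pos).1 hk
      rw [← hq0] at this
      push_cast at this
      nlinarith
    · -- q > 0 : f/q < t/c
      have hlt : f / q < t / c := by
        rw [div_lt_div_iff₀ hq0 hc]; nlinarith
      obtain ⟨r, hr1, hr2⟩ := exists_rat_btwn hlt
      have hden : (0:ℝ) < (r.den : ℝ) := by exact_mod_cast r.pos
      have hcast : (r : ℝ) = (r.num : ℝ) / (r.den : ℝ) := by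
        rw [Rat.cast_def]
      have h1 : (r.num : ℝ) * c ≤ (r.den : ℝ) * t := by
        rw [hcast, div_lt_div_iff₀ hden hc] at hr2
        nlinarith
      have h2 := (H r.num r.den r.pos).1 h1
      rw [hcast, div_lt_div_iff₀ hq0 hden] at hr1
      nlinarith
  · rcases eq_or_lt_of_le hq with hq0 | hq0
    · rw [← hq0] at h
      have hf : 0 < f := by nlinarith
      have ht : t / c * c = t := div_mul_cancel₀ t hc.ne'
      have hk : ((1:ℕ):ℝ) * t ≤ (⌈t / c⌉ : ℝ) * c := by
        have h2 := Int.le_ceil (t / c)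
        push_cast
        nlinarith [mul_le_mul_of_nonneg_right h2 hc.le]
      have := (H ⌈t / c⌉ 1 one_pos).2 hk
      rw [← hq0] at this
      push_cast at this
      nlinarith
    · have hlt : t / c < f / q := by
        rw [div_lt_div_iff₀ hc hq0]; nlinarith
      obtain ⟨r, hr1, hr2⟩ := exists_rat_btwn hlt
      have hden : (0:ℝ) < (r.den : ℝ) := by exact_mod_cast r.pos
      have hcast : (r : ℝ) = (r.num : ℝ) / (r.den : ℝ) := by
        rw [Rat.cast_def]
      have h1 : (r.den : ℝ) * t ≤ (r.num : ℝ) * c := by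
        rw [hcast, div_lt_div_iff₀ hc hden] at hr1
        nlinarith
      have h2 := (H r.num r.den r.pos).2 h1
      rw [hcast, div_lt_div_iff₀ hden hq0] at hr2
      nlinarith




theorem stmt_5 {n : ℕ} (hn : 0 < n) {C : Type*} [AddCommMonoid C]
    (V : (Fin n → C) → ℝ)
    (succ : (Fin n → C) → (Fin n → C) → Prop)
    (hrep : ∀ P Q : Fin n → C, V P > V Q ↔ succ P Q)
    (hadd : ∀ P Q : Fin n → C, V (P + Q) = V P + V Q)
    (hdom : ∀ P P' : Fin n → C,
      (∀ i, V (fun _ => P i) ≥ V (fun _ => P' i)) → V P ≥ V P')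
    (hx : ∃ x : C, V (fun _ => x) > 0) :
    ∃ p : Fin n → ℝ, (∀ i, 0 ≤ p i) ∧ (∑ i, p i) = 1 ∧
      ∀ P : Fin n → C, V P = ∑ i, p i * V (fun _ => P i) := by
  obtain ⟨x₀, hx₀⟩ := hx
  set c : ℝ := V (fun _ => x₀) with hc_def
  have hc : 0 < c := hx₀
  -- V 0 = 0
  have hV0 : V 0 = 0 := by
    have := hadd 0 0
    simp only [add_zero] at this
    linarith
  -- nsmul lemma
  have hVsmul : ∀ (m : ℕ) (P : Fin n → C), V (m • P) = m * V P := by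
    intro m
    induction m with
    | zero => intro P; simpa using hV0
    | succ k ih =>
      intro P
      rw [succ_nsmul, hadd, ih]
      push_cast; ring
  -- V over finite sums
  have hVsum : ∀ (s : Finset (Fin n)) (f : Fin n → (Fin n → C)),
      V (∑ i ∈ s, f i) = ∑ i ∈ s, V (f i) := by
    intro s f
    induction s using Finset.cons_induction with
    | empty => simpa using hV0
    | cons a s ha ih => rw [Finset.sum_cons, hadd, ih, Finset.sum_cons]
  -- delta acts
  set δ : Fin n → C → (Fin n → C) := fun i x j => if j = i then x else 0 with hδ_def
  have hδsum : ∀ x : C, ∑ i, δ i x = (fun _ => x) := by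
    intro x
    funext j
    rw [Finset.sum_apply]
    simp [hδ_def]
  have hδsumP : ∀ P : Fin n → C, ∑ i, δ i (P i) = P := by
    intro P
    funext j
    rw [Finset.sum_apply]
    simp [hδ_def]
  set q : Fin n → ℝ := fun i => V (δ i x₀) with hq_def
  -- constant act of a sum / nsmul
  have hconst_add : ∀ a b : C, V (fun _ => a + b) = V (fun _ => a) + V (fun _ => b) := by
    intro a b
    exact hadd (fun _ => a) (fun _ => b)
  have hconst_smul : ∀ (m : ℕ) (a : C), V (fun _ => m • a) = m * V (fun _ => a) := by
    intro m a
    exact hVsmul m (fun _ => a)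
  have hconst0 : V (fun _ => (0 : C)) = 0 := hV0
  -- q i ≥ 0
  have hqnn : ∀ i, 0 ≤ q i := by
    intro i
    have := hdom (δ i x₀) 0 ?_
    · simpa [hV0] using this
    · intro j
      simp only [hδ_def, Pi.zero_apply]
      by_cases hji : j = i
      · simp only [hji, if_pos rfl]
        rw [hconst0]; exact le_of_lt hc
      · simp only [if_neg hji]
        exact le_refl _
  -- sum q = c
  have hqsum : ∑ i, q i = c := by
    rw [hq_def]
    simp only
    rw [← hVsum, hδsum]
  -- key comparison lemma
  have hcomp : ∀ (i : Fin n) (x : C) (a b a' b' : ℕ),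
      (a : ℝ) * V (fun _ => x) + b * c ≥ (a' : ℝ) * V (fun _ => x) + b' * c →
      (a : ℝ) * V (δ i x) + b * q i ≥ (a' : ℝ) * V (δ i x) + b' * q i := by
    intro i x a b a' b' hge
    have key := hdom (a • δ i x + b • δ i x₀) (a' • δ i x + b' • δ i x₀) ?_
    · rw [hadd, hadd, hVsmul, hVsmul, hVsmul, hVsmul] at key
      exact key
    · intro j
      by_cases hji : j = i
      · subst hji
        have e1 : ((a • δ j x + b • δ j x₀) j) = a • x + b • x₀ := by
          simp [hδ_def]
        have e2 : ((a' • δ j x + b' • δ j x₀) j) = a' • x + b' • x₀ := by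
          simp [hδ_def]
        rw [e1, e2, hconst_add, hconst_add, hconst_smul, hconst_smul,
          hconst_smul, hconst_smul]
        exact hge
      · have e1 : ((a • δ i x + b • δ i x₀) j) = 0 := by
          simp [hδ_def, hji]
        have e2 : ((a' • δ i x + b' • δ i x₀) j) = 0 := by
          simp [hδ_def, hji]
        rw [e1, e2]
  -- the scalar identity
  have hkey : ∀ (i : Fin n) (x : C), c * V (δ i x) = V (fun _ => x) * q i := by
    intro i x
    apply aux_real c (q i) (V (fun _ => x)) (V (δ i x)) hc (hqnn i)
    intro k m hm
    constructor
    · intro hkc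
      rcases le_or_gt 0 k with hk | hk
      · have hkk : ((k.toNat : ℕ) : ℝ) = (k : ℝ) := by
          exact_mod_cast Int.toNat_of_nonneg hk
        have h := hcomp i x m 0 0 k.toNat (by rw [hkk]; push_cast; linarith)
        rw [hkk] at h; push_cast at h; linarith
      · have hkk : (((-k).toNat : ℕ) : ℝ) = -(k : ℝ) := by
          have h0 := Int.toNat_of_nonneg (by omega : (0:ℤ) ≤ -k)
          exact_mod_cast h0
        have h := hcomp i x m (-k).toNat 0 0 (by rw [hkk]; push_cast; linarith)
        rw [hkk] at h; push_cast at h; linarith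
    · intro hkc
      rcases le_or_gt 0 k with hk | hk
      · have hkk : ((k.toNat : ℕ) : ℝ) = (k : ℝ) := by
          exact_mod_cast Int.toNat_of_nonneg hk
        have h := hcomp i x 0 k.toNat m 0 (by rw [hkk]; push_cast; linarith)
        rw [hkk] at h; push_cast at h; linarith
      · have hkk : (((-k).toNat : ℕ) : ℝ) = -(k : ℝ) := by
          have h0 := Int.toNat_of_nonneg (by omega : (0:ℤ) ≤ -k)
          exact_mod_cast h0
        have h := hcomp i x 0 0 m (-k).toNat (by rw [hkk]; push_cast; linarith)
        rw [hkk] at h; push_cast at h; linarith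
  -- conclude
  refine ⟨fun i => q i / c, ?_, ?_, ?_⟩
  · intro i; exact div_nonneg (hqnn i) hc.le
  · rw [← Finset.sum_div, hqsum, div_self hc.ne']
  · intro P
    have h1 : V P = ∑ i, V (δ i (P i)) := by
      rw [← hVsum, hδsumP]
    rw [h1]
    apply Finset.sum_congr rfl
    intro i _
    have := hkey i (P i)
    field_simp
    linarith [hkey i (P i)]
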